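/- The q-difference operator D = Σ_{k=1}^n Π_{j≠k} ((t x_k − x_j)/(x_k − x_j)) T_{q,x_k}, where (T_{q,x_k} f)(x) = f(x_1,…,q x_k,…,x_n), maps the ring of symmetric polynomials ℚ(q,t)[x_1,…,x_n]^{S_n} into itself. -/

import Mathlib

open Finset

namespace Mac17
open MvPolynomial

variable {K : Type*} [Field K] {n : ℕ}

theorem aux_sub_dvd {K : Type*} [CommRing K] {n : ℕ} (i j : Fin n)
    (P : MvPolynomial (Fin n) K) :
    (X i - X j) ∣ P - aeval (fun l => if l = i then X j else X l) P := by
  induction P using MvPolynomial.induction_on with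
  | C a => simp
  | add p r hp hq =>
      rw [map_add]
      have := dvd_add hp hq
      convert this using 1; ring
  | mul_X p l hp =>
      rw [map_mul, aeval_X]
      have h2 : (X i - X j : MvPolynomial (Fin n) K) ∣
          (X l - if l = i then X j else X l) := by
        by_cases h : l = i
        · subst h; simp
        · simp [h]
      have key : p * X l - aeval (fun l => if l = i then X j else X l) p *
            (if l = i then X j else X l)
          = (p - aeval (fun l => if l = i then X j else X l) p) * X l
            + aeval (fun l => if l = i then X j else X l) p *
              (X l - if l = i then X j else X l) := by ring
      rw [key]
      exact dvd_add (hp.mul_right _) (h2.mul_left _)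

theorem X_sub_X_ne_zero {i j : Fin n} (h : i ≠ j) : (X i - X j : MvPolynomial (Fin n) K) ≠ 0 :=
  sub_ne_zero.mpr (fun he => h (MvPolynomial.X_injective he))

theorem aux_prime_X_sub_X {i j : Fin n} (h : i ≠ j) :
    Prime (X i - X j : MvPolynomial (Fin n) K) := by
  have hne : (X i - X j : MvPolynomial (Fin n) K) ≠ 0 := X_sub_X_ne_zero h
  rw [← Ideal.span_singleton_prime hne]
  have hker : Ideal.span {(X i - X j : MvPolynomial (Fin n) K)} =
      RingHom.ker ((aeval (fun l => if l = i then X j else X l) :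
        MvPolynomial (Fin n) K →ₐ[K] MvPolynomial (Fin n) K) :
        MvPolynomial (Fin n) K →+* MvPolynomial (Fin n) K) := by
    apply le_antisymm
    · rw [Ideal.span_le]
      intro x hx
      simp only [Set.mem_singleton_iff] at hx
      subst hx
      simp only [SetLike.mem_coe, RingHom.mem_ker, map_sub, AlgHom.coe_toRingHom, aeval_X]
      simp [if_neg (fun he : j = i => h he.symm)]
    · intro x hx
      rw [RingHom.mem_ker] at hx
      rw [Ideal.mem_span_singleton]
      have := aux_sub_dvd i j x
      rw [show ((aeval fun l => if l = i then X j else X l) x) = 0 from hx, sub_zero] at this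
      exact this
  rw [hker]
  exact RingHom.ker_isPrime _

theorem aux_prod_primes_dvd {α ι : Type*} [CommMonoidWithZero α] [IsCancelMulZero α] {s : Finset ι}
    {p : ι → α} {z : α} (hp : ∀ i ∈ s, Prime (p i))
    (huniq : ∀ i ∈ s, ∀ j ∈ s, Associated (p i) (p j) → i = j)
    (hdvd : ∀ i ∈ s, p i ∣ z) : (∏ i ∈ s, p i) ∣ z := by
  classical
  rw [← Associates.mk_dvd_mk]
  have hmk : Associates.mk (∏ i ∈ s, p i) = ∏ a ∈ s.image (fun i => Associates.mk (p i)), a := by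
    rw [Finset.prod_image (fun i hi j hj he =>
      huniq i hi j hj (Associates.mk_eq_mk_iff_associated.mp he))]
    show Associates.mkMonoidHom (∏ i ∈ s, p i) = ∏ i ∈ s, Associates.mkMonoidHom (p i)
    exact map_prod (Associates.mkMonoidHom) p s
  rw [hmk]
  apply Finset.prod_primes_dvd
  · intro a ha
    obtain ⟨i, hi, rfl⟩ := Finset.mem_image.mp ha
    exact Associates.prime_mk.mpr (hp i hi)
  · intro a ha
    obtain ⟨i, hi, rfl⟩ := Finset.mem_image.mp ha
    exact Associates.mk_dvd_mk.mpr (hdvd i hi)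

noncomputable def macB (n : ℕ) (K : Type*) [Field K] (k : Fin n) : MvPolynomial (Fin n) K :=
  ∏ j ∈ Finset.univ.erase k, (X k - X j)

noncomputable def macA (n : ℕ) {K : Type*} [Field K] (t : K) (k : Fin n) :
    MvPolynomial (Fin n) K :=
  ∏ j ∈ Finset.univ.erase k, (C t * X k - X j)

noncomputable def macS (n : ℕ) {K : Type*} [Field K] (q : K) (k : Fin n) :
    Fin n → MvPolynomial (Fin n) K :=
  fun j => if j = k then C q * X k else X j

def macPairs (n : ℕ) : Finset (Fin n × Fin n) :=
  Finset.univ.filter (fun p => p.1 < p.2)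

noncomputable def macV (n : ℕ) (K : Type*) [Field K] : MvPolynomial (Fin n) K :=
  ∏ p ∈ macPairs n, (X p.1 - X p.2)

noncomputable def macE (n : ℕ) (K : Type*) [Field K] (k : Fin n) : MvPolynomial (Fin n) K :=
  (-1) ^ ((Finset.univ.filter (· < k)).card) *
    ∏ p ∈ (macPairs n).filter (fun p => ¬(p.1 = k ∨ p.2 = k)), (X p.1 - X p.2)

noncomputable def macP (n : ℕ) {K : Type*} [Field K] (q t : K) (f : MvPolynomial (Fin n) K) :
    MvPolynomial (Fin n) K :=
  ∑ k : Fin n, macA n t k * macE n K k * aeval (macS n q k) f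

theorem macV_eq (k : Fin n) : macV n K = macB n K k * macE n K k := by
  classical
  have h1 : macV n K =
      (∏ p ∈ (macPairs n).filter (fun p => p.1 = k ∨ p.2 = k), (X p.1 - X p.2)) *
      ∏ p ∈ (macPairs n).filter (fun p => ¬(p.1 = k ∨ p.2 = k)), (X p.1 - X p.2) :=
    (Finset.prod_filter_mul_prod_filter_not _ _ _).symm
  have hf1 : ((macPairs n).filter (fun p => p.1 = k ∨ p.2 = k)).filter (fun p => p.2 = k)
      = (macPairs n).filter (fun p => p.2 = k) := by
    ext p; simp only [macPairs, Finset.mem_filter, Finset.mem_univ, true_and]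
    tauto
  have hf2 : ((macPairs n).filter (fun p => p.1 = k ∨ p.2 = k)).filter (fun p => ¬ p.2 = k)
      = (macPairs n).filter (fun p => p.1 = k) := by
    ext p; simp only [macPairs, Finset.mem_filter, Finset.mem_univ, true_and]
    constructor
    · rintro ⟨⟨h1, h2⟩, h3⟩; exact ⟨h1, h2.resolve_right h3⟩
    · rintro ⟨h1, h2⟩; exact ⟨⟨h1, Or.inl h2⟩, fun hc => absurd h1 (by rw [h2, hc]; exact lt_irrefl _)⟩
  have h2 : (∏ p ∈ (macPairs n).filter (fun p => p.1 = k ∨ p.2 = k), (X p.1 - X p.2 : MvPolynomial (Fin n) K)) =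
      (∏ p ∈ (macPairs n).filter (fun p => p.2 = k), (X p.1 - X p.2)) *
      ∏ p ∈ (macPairs n).filter (fun p => p.1 = k), (X p.1 - X p.2) := by
    rw [← Finset.prod_filter_mul_prod_filter_not ((macPairs n).filter (fun p => p.1 = k ∨ p.2 = k)) (fun p => p.2 = k), hf1, hf2]
  have h3 : (∏ p ∈ (macPairs n).filter (fun p => p.2 = k), (X p.1 - X p.2 : MvPolynomial (Fin n) K)) =
      ∏ j ∈ Finset.univ.filter (· < k), (X j - X k) := by
    apply Finset.prod_bij (fun p _ => p.1)
    · intro p hp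
      simp only [macPairs, Finset.mem_filter, Finset.mem_univ, true_and] at hp ⊢
      rw [← hp.2]; exact hp.1
    · intro p hp r hr he
      simp only [macPairs, Finset.mem_filter, Finset.mem_univ, true_and] at hp hr
      exact Prod.ext he (hp.2.trans hr.2.symm)
    · intro b hb
      simp only [Finset.mem_filter, Finset.mem_univ, true_and] at hb
      exact ⟨(b, k), by simp [macPairs, hb], rfl⟩
    · intro p hp
      simp only [macPairs, Finset.mem_filter, Finset.mem_univ, true_and] at hp
      rw [hp.2]
  have h4 : (∏ p ∈ (macPairs n).filter (fun p => p.1 = k), (X p.1 - X p.2 : MvPolynomial (Fin n) K)) =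
      ∏ j ∈ Finset.univ.filter (k < ·), (X k - X j) := by
    apply Finset.prod_bij (fun p _ => p.2)
    · intro p hp
      simp only [macPairs, Finset.mem_filter, Finset.mem_univ, true_and] at hp ⊢
      rw [← hp.2]; exact hp.1
    · intro p hp r hr he
      simp only [macPairs, Finset.mem_filter, Finset.mem_univ, true_and] at hp hr
      exact Prod.ext (hp.2.trans hr.2.symm) he
    · intro b hb
      simp only [Finset.mem_filter, Finset.mem_univ, true_and] at hb
      exact ⟨(k, b), by simp [macPairs, hb], rfl⟩
    · intro p hp
      simp only [macPairs, Finset.mem_filter, Finset.mem_univ, true_and] at hp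
      rw [hp.2]
  have h5 : (∏ j ∈ Finset.univ.filter (· < k), (X j - X k : MvPolynomial (Fin n) K)) =
      (-1) ^ ((Finset.univ.filter (· < k)).card) * ∏ j ∈ Finset.univ.filter (· < k), (X k - X j) := by
    rw [← Finset.prod_const, ← Finset.prod_mul_distrib]
    apply Finset.prod_congr rfl
    intro j _; ring
  have h6 : macB n K k =
      (∏ j ∈ Finset.univ.filter (· < k), (X k - X j : MvPolynomial (Fin n) K)) *
      ∏ j ∈ Finset.univ.filter (k < ·), (X k - X j) := by
    rw [macB, ← Finset.prod_filter_mul_prod_filter_not (Finset.univ.erase k) (· < k)]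
    congr 1
    · apply Finset.prod_congr _ (fun _ _ => rfl)
      ext j; simp only [Finset.mem_filter, Finset.mem_erase, Finset.mem_univ, true_and, and_true]
      exact ⟨fun h => h.2, fun h => ⟨ne_of_lt h, h⟩⟩
    · apply Finset.prod_congr _ (fun _ _ => rfl)
      ext j; simp only [Finset.mem_filter, Finset.mem_erase, Finset.mem_univ, true_and, and_true]
      constructor
      · rintro ⟨h1, h2⟩; exact lt_of_le_of_ne (not_lt.mp h2) (Ne.symm h1)
      · intro h; exact ⟨(ne_of_lt h).symm, not_lt.mpr (le_of_lt h)⟩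
  rw [h1, h2, h3, h4, h5, h6, macE]
  ring

theorem macB_ne_zero (k : Fin n) : macB n K k ≠ 0 := by
  rw [macB]
  apply Finset.prod_ne_zero_iff.mpr
  intro j hj
  exact X_sub_X_ne_zero (Finset.ne_of_mem_erase hj).symm

theorem rename_macB (σ : Equiv.Perm (Fin n)) (k : Fin n) :
    rename (σ : Fin n → Fin n) (macB n K k) = macB n K (σ k) := by
  rw [macB, macB, map_prod]
  apply Finset.prod_bij (fun l _ => σ l)
  · intro l hl
    simp only [Finset.mem_erase, Finset.mem_univ, and_true] at hl ⊢
    exact fun he => hl (σ.injective he)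
  · intro a _ b _ he; exact σ.injective he
  · intro b hb
    simp only [Finset.mem_erase, Finset.mem_univ, and_true] at hb
    refine ⟨σ.symm b, Finset.mem_erase.mpr ⟨fun he => hb ?_, Finset.mem_univ _⟩, by simp⟩
    rw [← σ.apply_symm_apply b, he]
  · intro l _; simp


theorem rename_macA (σ : Equiv.Perm (Fin n)) (t : K) (k : Fin n) :
    rename (σ : Fin n → Fin n) (macA n t k) = macA n t (σ k) := by
  rw [macA, macA, map_prod]
  apply Finset.prod_bij (fun l _ => σ l)
  · intro l hl
    simp only [Finset.mem_erase, Finset.mem_univ, and_true] at hl ⊢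
    exact fun he => hl (σ.injective he)
  · intro a _ b _ he; exact σ.injective he
  · intro b hb
    simp only [Finset.mem_erase, Finset.mem_univ, and_true] at hb
    refine ⟨σ.symm b, Finset.mem_erase.mpr ⟨fun he => hb ?_, Finset.mem_univ _⟩, by simp⟩
    rw [← σ.apply_symm_apply b, he]
  · intro l _; simp



theorem rename_macF (σ : Equiv.Perm (Fin n)) (q : K) (k : Fin n)
    {f : MvPolynomial (Fin n) K} (hf : f.IsSymmetric) :
    rename (σ : Fin n → Fin n) (aeval (macS n q k) f) = aeval (macS n q (σ k)) f := by
  rw [comp_aeval_apply]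
  have hc : (fun i => rename (σ : Fin n → Fin n) (macS n q k i))
      = (macS n q (σ k)) ∘ (σ : Fin n → Fin n) := by
    funext l
    simp only [macS, Function.comp_apply]
    by_cases h : l = k
    · subst h; simp
    · rw [if_neg h, if_neg (fun he => h (σ.injective he)), rename_X]
  rw [hc, ← aeval_rename, hf σ]

theorem assoc_pairs {a b c d : Fin n} (hab : a < b) (hcd : c < d)
    (h : Associated (X a - X b : MvPolynomial (Fin n) K) (X c - X d)) : a = c ∧ b = d := by
  obtain ⟨u, hu⟩ := h.dvd
  have hz : aeval (R := K) (fun l => if l = a then X b else X l : Fin n → MvPolynomial (Fin n) K)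
      (X a - X b) = 0 := by simp [ne_of_gt hab]
  have h0 : (if c = a then (X b : MvPolynomial (Fin n) K) else X c)
      - (if d = a then X b else X d) = 0 := by
    have hc := congrArg (aeval (R := K) (fun l => if l = a then X b else X l :
      Fin n → MvPolynomial (Fin n) K)) hu
    rw [map_mul, hz, zero_mul] at hc
    simpa using hc
  by_cases hca : c = a
  · rw [if_pos hca] at h0
    by_cases hda : d = a
    · exact absurd (hca.trans hda.symm) (ne_of_lt hcd)
    · rw [if_neg hda] at h0
      exact ⟨hca.symm, MvPolynomial.X_injective (sub_eq_zero.mp h0)⟩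
  · rw [if_neg hca] at h0
    by_cases hda : d = a
    · rw [if_pos hda] at h0
      have hcb : c = b := MvPolynomial.X_injective (sub_eq_zero.mp h0)
      exact absurd ((hab.trans_eq hcb.symm).trans (hcd.trans_eq hda)) (lt_irrefl a)
    · rw [if_neg hda] at h0
      exact absurd (MvPolynomial.X_injective (sub_eq_zero.mp h0)) (ne_of_lt hcd)

theorem macE_vanish {i j k : Fin n} (hij : i < j) (hki : k ≠ i) (hkj : k ≠ j) :
    aeval (R := K) (fun l => if l = i then X j else X l : Fin n → MvPolynomial (Fin n) K)
      (macE n K k) = 0 := by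
  rw [macE, map_mul, map_prod]
  have hmem : ((i, j) : Fin n × Fin n) ∈ (macPairs n).filter (fun p => ¬(p.1 = k ∨ p.2 = k)) := by
    simp only [macPairs, Finset.mem_filter, Finset.mem_univ, true_and]
    exact ⟨hij, by push_neg; exact ⟨fun h => hki h.symm, fun h => hkj h.symm⟩⟩
  have hfac : aeval (R := K) (fun l => if l = i then X j else X l : Fin n → MvPolynomial (Fin n) K)
      (X (i, j).1 - X (i, j).2) = 0 := by simp [ne_of_gt hij]
  rw [Finset.prod_eq_zero hmem hfac, mul_zero]

theorem macV_dvd (q t : K) (f : MvPolynomial (Fin n) K) (hf : f.IsSymmetric) :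
    macV n K ∣ macP n q t f := by
  classical
  rw [macV]
  apply aux_prod_primes_dvd
  · intro p hp
    simp only [macPairs, Finset.mem_filter, Finset.mem_univ, true_and] at hp
    exact aux_prime_X_sub_X (ne_of_lt hp)
  · intro p hp r hr hass
    simp only [macPairs, Finset.mem_filter, Finset.mem_univ, true_and] at hp hr
    obtain ⟨h1, h2⟩ := assoc_pairs hp hr hass
    exact Prod.ext h1 h2
  · rintro ⟨i, j⟩ hp
    simp only [macPairs, Finset.mem_filter, Finset.mem_univ, true_and] at hp
    set ψ : MvPolynomial (Fin n) K →ₐ[K] MvPolynomial (Fin n) K :=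
      aeval (fun l => if l = i then X j else X l) with hψ
    suffices h0 : ψ (macP n q t f) = 0 by
      have := aux_sub_dvd i j (macP n q t f)
      rw [show (aeval fun l => if l = i then X j else X l) (macP n q t f) = ψ (macP n q t f)
        from rfl, h0, sub_zero] at this
      exact this
    have hA : ψ (macA n t i) = ψ (macA n t j) := by
      rw [macA, macA, map_prod, map_prod]
      apply Finset.prod_bij (fun l _ => Equiv.swap i j l)
      · intro l hl
        simp only [Finset.mem_erase, Finset.mem_univ, and_true] at hl ⊢
        intro he
        apply hl
        have := (Equiv.swap i j).injective (a₁ := l) (a₂ := i)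
        apply this
        rw [he, Equiv.swap_apply_left]
      · intro x _ y _ he; exact (Equiv.swap i j).injective he
      · intro b hb
        simp only [Finset.mem_erase, Finset.mem_univ, and_true] at hb
        refine ⟨Equiv.swap i j b, Finset.mem_erase.mpr ⟨?_, Finset.mem_univ _⟩, by simp⟩
        intro he
        apply hb
        have : Equiv.swap i j (Equiv.swap i j b) = Equiv.swap i j i := by rw [he]
        rwa [Equiv.swap_apply_self, Equiv.swap_apply_left] at this
      · intro l hl
        simp only [Finset.mem_erase, Finset.mem_univ, and_true] at hl
        by_cases hlj : l = j
        · simp [hψ, hlj, Equiv.swap_apply_right, MvPolynomial.algebraMap_eq,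
            ne_of_lt hp, ne_of_gt hp, hl]
        · simp [hψ, Equiv.swap_apply_of_ne_of_ne hl hlj, MvPolynomial.algebraMap_eq,
            hl, hlj, ne_of_gt hp]
    have hF : ψ (aeval (macS n q i) f) = ψ (aeval (macS n q j) f) := by
      rw [comp_aeval_apply, comp_aeval_apply]
      have hc : (fun l => ψ (macS n q i l))
          = (fun l => ψ (macS n q j l)) ∘ (Equiv.swap i j) := by
        funext l
        simp only [macS, Function.comp_apply, hψ]
        by_cases hli : l = i
        · simp [hli, Equiv.swap_apply_left, ne_of_gt hp, MvPolynomial.algebraMap_eq]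
        · by_cases hlj : l = j
          · simp [hlj, hli, Equiv.swap_apply_right, ne_of_lt hp, ne_of_gt hp,
              MvPolynomial.algebraMap_eq]
          · simp [hli, hlj, Equiv.swap_apply_of_ne_of_ne hli hlj]
      rw [hc]
      have : (fun l => ψ (macS n q j l)) ∘ (Equiv.swap i j)
          = (fun l => ψ (macS n q j l)) ∘ ((Equiv.swap i j : Equiv.Perm (Fin n)) : Fin n → Fin n) := rfl
      rw [this, ← aeval_rename, hf (Equiv.swap i j)]
    have hE : ψ (macE n K i) + ψ (macE n K j) = 0 := by
      have hji : j ∈ Finset.univ.erase i := Finset.mem_erase.mpr ⟨ne_of_gt hp, Finset.mem_univ _⟩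
      have hij' : i ∈ Finset.univ.erase j := Finset.mem_erase.mpr ⟨ne_of_lt hp, Finset.mem_univ _⟩
      have h1 : macB n K i = (X i - X j) * ∏ l ∈ (Finset.univ.erase i).erase j, (X i - X l) := by
        rw [macB, ← Finset.mul_prod_erase _ _ hji]
      have h2 : macB n K j = (X j - X i) * ∏ l ∈ (Finset.univ.erase j).erase i, (X j - X l) := by
        rw [macB, ← Finset.mul_prod_erase _ _ hij']
      have h3 : macB n K i * macE n K i = macB n K j * macE n K j := by
        rw [← macV_eq, ← macV_eq]
      rw [h1, h2] at h3
      have h4 : (X i - X j) * ((∏ l ∈ (Finset.univ.erase i).erase j, (X i - X l)) * macE n K i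
          + (∏ l ∈ (Finset.univ.erase j).erase i, (X j - X l)) * macE n K j) = 0 := by
        linear_combination h3
      have h5 : (∏ l ∈ (Finset.univ.erase i).erase j, (X i - X l)) * macE n K i
          + (∏ l ∈ (Finset.univ.erase j).erase i, (X j - X l)) * macE n K j = 0 :=
        (mul_eq_zero.mp h4).resolve_left (X_sub_X_ne_zero (ne_of_lt hp))
      have h6 := congrArg ψ h5
      rw [map_add, map_mul, map_mul, map_zero, map_prod, map_prod] at h6
      set W : MvPolynomial (Fin n) K := ∏ l ∈ (Finset.univ.erase i).erase j, (X j - X l) with hW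
      have h7 : (∏ l ∈ (Finset.univ.erase i).erase j, ψ (X i - X l)) = W := by
        apply Finset.prod_congr rfl
        intro l hl
        simp only [Finset.mem_erase, Finset.mem_univ, and_true] at hl
        simp [hψ, hl.1, hl.2, ne_of_gt hp]
      have h8 : (∏ l ∈ (Finset.univ.erase j).erase i, ψ (X j - X l)) = W := by
        rw [hW, Finset.erase_right_comm]
        apply Finset.prod_congr rfl
        intro l hl
        simp only [Finset.mem_erase, Finset.mem_univ, and_true] at hl
        simp [hψ, hl.1, hl.2, ne_of_gt hp]
      rw [h7, h8] at h6
      have hWne : W ≠ 0 := by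
        rw [hW]
        apply Finset.prod_ne_zero_iff.mpr
        intro l hl
        simp only [Finset.mem_erase, Finset.mem_univ, and_true] at hl
        exact X_sub_X_ne_zero hl.1.symm
      have h9 : W * (ψ (macE n K i) + ψ (macE n K j)) = 0 := by linear_combination h6
      exact (mul_eq_zero.mp h9).resolve_left hWne
    rw [macP, map_sum]
    have hsub : ∑ k ∈ ({i, j} : Finset (Fin n)),
        ψ (macA n t k * macE n K k * aeval (macS n q k) f)
        = ∑ k : Fin n, ψ (macA n t k * macE n K k * aeval (macS n q k) f) := by
      apply Finset.sum_subset (Finset.subset_univ _)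
      intro k _ hk
      simp only [Finset.mem_insert, Finset.mem_singleton] at hk
      push_neg at hk
      rw [map_mul, map_mul, show ψ (macE n K k) = 0 from macE_vanish hp hk.1 hk.2,
        mul_zero, zero_mul]
    rw [← hsub, Finset.sum_pair (ne_of_lt hp)]
    simp only [map_mul]
    rw [hA, hF]
    linear_combination (ψ (macA n t j) * ψ (aeval (macS n q j) f)) * hE

theorem macV_ne_zero : macV n K ≠ 0 := by
  rw [macV]
  apply Finset.prod_ne_zero_iff.mpr
  intro p hp
  simp only [macPairs, Finset.mem_filter, Finset.mem_univ, true_and] at hp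
  exact X_sub_X_ne_zero (ne_of_lt hp)

theorem macE_ne_zero (k : Fin n) : macE n K k ≠ 0 := by
  intro h
  exact macV_ne_zero (K := K) (n := n) (by rw [macV_eq k, h, mul_zero])

theorem macE_cross (σ : Equiv.Perm (Fin n)) (k : Fin n) :
    macV n K * rename (σ : Fin n → Fin n) (macE n K k)
      = macE n K (σ k) * rename (σ : Fin n → Fin n) (macV n K) := by
  have e1 : macB n K (σ k) * rename (σ : Fin n → Fin n) (macE n K k)
      = rename (σ : Fin n → Fin n) (macV n K) := by
    rw [← rename_macB σ k, ← map_mul, ← macV_eq]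
  have e2 : macB n K (σ k) * macE n K (σ k) = macV n K := (macV_eq _).symm
  apply mul_left_cancel₀ (macB_ne_zero (σ k))
  calc macB n K (σ k) * (macV n K * rename (σ : Fin n → Fin n) (macE n K k))
      = macV n K * (macB n K (σ k) * rename (σ : Fin n → Fin n) (macE n K k)) := by ring
    _ = macV n K * rename (σ : Fin n → Fin n) (macV n K) := by rw [e1]
    _ = (macB n K (σ k) * macE n K (σ k)) * rename (σ : Fin n → Fin n) (macV n K) := by rw [e2]
    _ = macB n K (σ k) * (macE n K (σ k) * rename (σ : Fin n → Fin n) (macV n K)) := by ring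

theorem macP_sym (q t : K) {f : MvPolynomial (Fin n) K} (hf : f.IsSymmetric)
    (σ : Equiv.Perm (Fin n)) :
    rename (σ : Fin n → Fin n) (macP n q t f) * macV n K
      = macP n q t f * rename (σ : Fin n → Fin n) (macV n K) := by
  rw [macP, map_sum, Finset.sum_mul, Finset.sum_mul]
  rw [← Equiv.sum_comp σ (fun k => macA n t k * macE n K k * aeval (macS n q k) f
    * rename (σ : Fin n → Fin n) (macV n K))]
  apply Finset.sum_congr rfl
  intro k _
  rw [map_mul, map_mul, rename_macA, rename_macF σ q k hf]
  have := macE_cross (K := K) σ k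
  linear_combination (macA n t (σ k) * aeval (macS n q (σ k)) f) * this

end Mac17

open MvPolynomial Mac17 in
theorem stmt_17 {K : Type*} [Field K] (q t : K) (n : ℕ)
    (f : MvPolynomial (Fin n) K) (hf : f.IsSymmetric) :
    ∃ g : MvPolynomial (Fin n) K, g.IsSymmetric ∧
      algebraMap (MvPolynomial (Fin n) K) (FractionRing (MvPolynomial (Fin n) K)) g =
        ∑ k : Fin n,
          (∏ j ∈ Finset.univ.erase k,
            (algebraMap (MvPolynomial (Fin n) K) (FractionRing (MvPolynomial (Fin n) K))
                (MvPolynomial.C t * MvPolynomial.X k - MvPolynomial.X j) /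
              algebraMap (MvPolynomial (Fin n) K) (FractionRing (MvPolynomial (Fin n) K))
                (MvPolynomial.X k - MvPolynomial.X j))) *
            algebraMap (MvPolynomial (Fin n) K) (FractionRing (MvPolynomial (Fin n) K))
              (MvPolynomial.aeval
                (fun j : Fin n => if j = k then MvPolynomial.C q * MvPolynomial.X k
                  else MvPolynomial.X j) f) := by
  classical
  obtain ⟨g, hg⟩ := macV_dvd q t f hf
  set φ := algebraMap (MvPolynomial (Fin n) K) (FractionRing (MvPolynomial (Fin n) K)) with hφdef
  have hφinj : Function.Injective φ := IsFractionRing.injective _ _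
  have hφne : ∀ x : MvPolynomial (Fin n) K, x ≠ 0 → φ x ≠ 0 := fun x hx h =>
    hx (hφinj (by rw [h, map_zero]))
  refine ⟨g, ?_, ?_⟩
  · intro σ
    have h1 := macP_sym q t hf σ
    rw [hg, map_mul] at h1
    have hVne := macV_ne_zero (n := n) (K := K)
    have hrVne : rename (σ : Fin n → Fin n) (macV n K) ≠ 0 := fun h =>
      hVne (MvPolynomial.rename_injective _ σ.injective (by rw [h, map_zero]))
    apply mul_left_cancel₀ (mul_ne_zero hrVne hVne)
    calc rename (σ : Fin n → Fin n) (macV n K) * macV n K * rename (σ : Fin n → Fin n) g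
        = rename (σ : Fin n → Fin n) (macV n K) * rename (σ : Fin n → Fin n) g * macV n K := by
          ring
      _ = macV n K * g * rename (σ : Fin n → Fin n) (macV n K) := h1
      _ = rename (σ : Fin n → Fin n) (macV n K) * macV n K * g := by ring
  · have hterm : ∀ k : Fin n,
        (∏ j ∈ Finset.univ.erase k, (φ (C t * X k - X j) / φ (X k - X j)))
          * φ (aeval (macS n q k) f)
        = φ (macA n t k * macE n K k * aeval (macS n q k) f) / φ (macV n K) := by
      intro k
      have hB : φ (macB n K k) ≠ 0 := hφne _ (macB_ne_zero k)
      have hE : φ (macE n K k) ≠ 0 := hφne _ (macE_ne_zero k)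
      have hV : φ (macV n K) ≠ 0 := hφne _ macV_ne_zero
      have h1 : (∏ j ∈ Finset.univ.erase k, (φ (C t * X k - X j) / φ (X k - X j)))
          = φ (macA n t k) / φ (macB n K k) := by
        rw [Finset.prod_div_distrib, macA, macB, map_prod, map_prod]
      rw [h1, map_mul, map_mul,
        show φ (macV n K) = φ (macB n K k) * φ (macE n K k) from by rw [← map_mul, ← macV_eq]]
      field_simp
    have hrhs : ∑ k : Fin n, (∏ j ∈ Finset.univ.erase k,
          (φ (C t * X k - X j) / φ (X k - X j))) * φ (aeval (macS n q k) f)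
        = φ (macP n q t f) / φ (macV n K) := by
      rw [macP, map_sum, Finset.sum_div]
      exact Finset.sum_congr rfl fun k _ => hterm k
    calc φ g = φ (macP n q t f) / φ (macV n K) := by
          rw [hg, map_mul, mul_div_cancel_left₀ _ (hφne _ macV_ne_zero)]
      _ = _ := hrhs.symm
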